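/- For nonempty compact convex subsets A, B, C, D of a topological vector space, the relation defined by (A,B) ~ (C,D) iff A + D = B + C (Minkowski sum) is an equivalence relation on pairs of such sets. -/

import Mathlib

open Pointwise Filter Topology

private lemma radstrom_subset
    {M : Type*} [AddCommGroup M] [Module ℝ M] [TopologicalSpace M]
    [IsTopologicalAddGroup M] [ContinuousSMul ℝ M] [T2Space M]
    {A B K : Set M} (hB : IsCompact B) (hBc : Convex ℝ B)
    (hK : IsCompact K) (hKne : K.Nonempty)
    (h : A + K ⊆ B + K) : A ⊆ B := by
  intro a ha
  obtain ⟨c0, hc0⟩ := hKne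
  -- recursively choose b n ∈ B, c (n+1) ∈ K with a + c n = b n + c (n+1)
  have step : ∀ c ∈ K, ∃ b ∈ B, ∃ c' ∈ K, a + c = b + c' := by
    intro c hc
    have : a + c ∈ B + K := h (Set.add_mem_add ha hc)
    obtain ⟨b, hb, c', hc', hbc⟩ := this
    exact ⟨b, hb, c', hc', hbc.symm⟩
  choose! b hb c' hc' heq using step
  -- sequence c : ℕ → M
  let c : ℕ → M := fun n => Nat.rec c0 (fun _ x => c' x) n
  have hcK : ∀ n, c n ∈ K := by
    intro n
    induction n with
    | zero => exact hc0
    | succ n ih => exact hc' _ ih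
  have hbB : ∀ n, b (c n) ∈ B := fun n => hb _ (hcK n)
  have key : ∀ n : ℕ, (n : ℝ) • a + c 0 = (∑ i ∈ Finset.range n, b (c i)) + c n := by
    intro n
    induction n with
    | zero => simp
    | succ n ih =>
      have h1 : a + c n = b (c n) + c (n + 1) := heq _ (hcK n)
      have : c (n + 1) = c' (c n) := rfl
      push_cast
      rw [add_smul, one_smul, Finset.sum_range_succ]
      have : ((n : ℝ) • a + c 0) + a = ((∑ i ∈ Finset.range n, b (c i)) + c n) + a := by
        rw [ih]
      calc (n : ℝ) • a + a + c 0 = ((n : ℝ) • a + c 0) + a := by abel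
        _ = ((∑ i ∈ Finset.range n, b (c i)) + c n) + a := by rw [ih]
        _ = (∑ i ∈ Finset.range n, b (c i)) + (a + c n) := by abel
        _ = (∑ i ∈ Finset.range n, b (c i)) + (b (c n) + c (n + 1)) := by rw [h1]
        _ = (∑ i ∈ Finset.range n, b (c i)) + b (c n) + c (n + 1) := by abel
  -- x n := average of b's, belongs to B, tends to a
  have hxB : ∀ n : ℕ, 1 ≤ n → ((n : ℝ)⁻¹ • ∑ i ∈ Finset.range n, b (c i)) ∈ B := by
    intro n hn
    have hnpos : (0 : ℝ) < n := by exact_mod_cast hn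
    rw [Finset.smul_sum]
    refine hBc.sum_mem (fun i _ => by positivity) ?_ (fun i _ => hbB i)
    simp [Finset.sum_const, hnpos.ne']
  have hxa : ∀ n : ℕ, 1 ≤ n →
      (n : ℝ)⁻¹ • ∑ i ∈ Finset.range n, b (c i) = a + (n : ℝ)⁻¹ • (c 0 - c n) := by
    intro n hn
    have hnpos : (0 : ℝ) < n := by exact_mod_cast hn
    have h1 : (∑ i ∈ Finset.range n, b (c i)) = (n : ℝ) • a + (c 0 - c n) := by
      have hk := eq_sub_of_add_eq (key n).symm
      rw [hk]; abel
    rw [h1, smul_add, smul_smul, inv_mul_cancel₀ hnpos.ne', one_smul]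
  -- the correction term tends to 0
  have hbd : Bornology.IsVonNBounded ℝ (K - K) := by
    letI : UniformSpace M := IsTopologicalAddGroup.rightUniformSpace M
    haveI : IsUniformAddGroup M := isUniformAddGroup_of_addCommGroup
    have : IsCompact (K - K) := by
      rw [sub_eq_add_neg]
      exact hK.add hK.neg
    exact this.totallyBounded.isVonNBounded ℝ
  have hε : Tendsto (fun n : ℕ => (n : ℝ)⁻¹) atTop (𝓝 0) := by
    exact tendsto_inv_atTop_zero.comp tendsto_natCast_atTop_atTop
  have htend0 : Tendsto (fun n : ℕ => (n : ℝ)⁻¹ • (c 0 - c n)) atTop (𝓝 0) := by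
    have := hbd.smul_tendsto_zero (x := fun n : ℕ => c 0 - c n) (ε := fun n : ℕ => (n : ℝ)⁻¹)
      (Eventually.of_forall (fun n => Set.sub_mem_sub (hcK 0) (hcK n))) hε
    exact this
  have htend : Tendsto (fun n : ℕ => a + (n : ℝ)⁻¹ • (c 0 - c n)) atTop (𝓝 a) := by
    have := tendsto_const_nhds.add htend0 (f := fun _ : ℕ => a) (x := atTop)
    simpa using this
  have hclosed : IsClosed B := hB.isClosed
  refine hclosed.mem_of_tendsto htend ?_
  filter_upwards [eventually_ge_atTop 1] with n hn
  rw [← hxa n hn]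
  exact hxB n hn

private lemma radstrom_cancel
    {M : Type*} [AddCommGroup M] [Module ℝ M] [TopologicalSpace M]
    [IsTopologicalAddGroup M] [ContinuousSMul ℝ M] [T2Space M]
    {A B K : Set M} (hA : IsCompact A) (hAc : Convex ℝ A)
    (hB : IsCompact B) (hBc : Convex ℝ B)
    (hK : IsCompact K) (hKne : K.Nonempty)
    (h : A + K = B + K) : A = B :=
  Set.Subset.antisymm (radstrom_subset hB hBc hK hKne h.le)
    (radstrom_subset hA hAc hK hKne h.ge)

/-- For nonempty compact convex subsets `A, B, C, D` of a (Hausdorff)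
topological vector space `M`, the relation on pairs given by
`(A,B) ~ (C,D) ↔ A + D = B + C` (Minkowski sum) is an equivalence relation. -/
theorem minkowski_pair_relation_equivalence
    (M : Type*) [AddCommGroup M] [Module ℝ M] [TopologicalSpace M]
    [IsTopologicalAddGroup M] [ContinuousSMul ℝ M] [T2Space M] :
    Equivalence (fun p q : {A : Set M // A.Nonempty ∧ IsCompact A ∧ Convex ℝ A} ×
                            {A : Set M // A.Nonempty ∧ IsCompact A ∧ Convex ℝ A} =>
      (p.1 : Set M) + (q.2 : Set M) = (p.2 : Set M) + (q.1 : Set M)) := by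
  constructor
  · intro p
    exact add_comm _ _
  · intro p q h
    have : (q.1 : Set M) + (p.2 : Set M) = (q.2 : Set M) + (p.1 : Set M) := by
      rw [add_comm (q.1 : Set M), add_comm (q.2 : Set M)]
      exact h.symm
    exact this
  · rintro ⟨⟨A, hAne, hAcp, hAcv⟩, ⟨B, hBne, hBcp, hBcv⟩⟩
      ⟨⟨C, hCne, hCcp, hCcv⟩, ⟨D, hDne, hDcp, hDcv⟩⟩
      ⟨⟨E, hEne, hEcp, hEcv⟩, ⟨F, hFne, hFcp, hFcv⟩⟩ h1 h2
    simp only at h1 h2 ⊢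
    -- h1 : A + D = B + C, h2 : C + F = D + E, goal : A + F = B + E
    apply radstrom_cancel (hAcp.add hFcp) (hAcv.add hFcv) (hBcp.add hEcp) (hBcv.add hEcv)
      (hCcp.add hDcp) (hCne.add hDne)
    calc A + F + (C + D) = (A + D) + (C + F) := by abel
      _ = (B + C) + (D + E) := by rw [h1, h2]
      _ = B + E + (C + D) := by abel
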